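/- arXiv:2505.07789 — 2 statements merged into one kernel-verified Lean document; each statement's English description precedes it below -/
import Mathlib

section
/- If W = (W, I, ≼, ∘, ∼, −, ¬) is a DqRA-frame, then the map x ↦ ↑x = {y ∈ W : x ≼ y} is an isomorphism from W onto the dual frame (W^+)_+ of its complex algebra; in particular, in addition to being an order-isomorphism preserving I, ∘, ∼ and −, it satisfies ↑(x^¬) = (↑x)^¬. -/
/-- Extension of a binary set-operation `c : W → W → Set W` to subsets:
`U ∘ V = ⋃ { x ∘ y : x ∈ U, y ∈ V }`. -/
def setComp {W : Type*} (c : W → W → Set W) (U V : Set W) : Set W :=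
  {z | ∃ x ∈ U, ∃ y ∈ V, z ∈ c x y}

/-- A DInFL-frame `(W, I, ≼, ∘, ∼, −)`. -/
structure DInFLFrame (W : Type*) where
  I : Set W
  le : W → W → Prop
  le_refl : ∀ x, le x x
  le_trans : ∀ x y z, le x y → le y z → le x z
  le_antisymm : ∀ x y, le x y → le y x → x = y
  comp : W → W → Set W
  tld : W → W
  mns : W → W
  ax1 : ∀ x y, (le x y ↔ y ∈ setComp comp I {x}) ∧ (le x y ↔ y ∈ setComp comp {x} I)
  ax2 : ∀ x y, le x y → x ∈ I → y ∈ I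
  ax3 : ∀ u v x y, le x y → x ∈ comp u v → y ∈ comp u v
  ax4 : ∀ x y z, setComp comp (comp x y) {z} = setComp comp {x} (comp y z)
  ax5 : ∀ x y z, tld z ∈ comp x y ↔ mns y ∈ comp z x
  ax6 : ∀ x, le (mns (tld x)) x ∧ le (tld (mns x)) x

/-- Upsets of the underlying poset of a DInFL-frame. -/
def DInFLFrame.IsUpset {W : Type*} (F : DInFLFrame W) (U : Set W) : Prop :=
  ∀ x y, F.le x y → x ∈ U → y ∈ U

/-- The operation `∼U = {w : w⁻ ∉ U}` of the complex algebra. -/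
def DInFLFrame.sneg {W : Type*} (F : DInFLFrame W) (U : Set W) : Set W :=
  {w | F.mns w ∉ U}

/-- The operation `−U = {w : w^∼ ∉ U}` of the complex algebra. -/
def DInFLFrame.mneg {W : Type*} (F : DInFLFrame W) (U : Set W) : Set W :=
  {w | F.tld w ∉ U}

/-- A DqRA-frame: a DInFL-frame with a De Morgan operation `ng` (¬) satisfying
(7) `x^{¬¬} = x`, (8) `¬` is order-reversing, and
(9) `z⁻ ∈ x∘y ⟺ z^¬ ∈ y^{∼¬} ∘ x^{∼¬}`. -/
structure DqRAFrame (W : Type*) extends DInFLFrame W where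
  ng : W → W
  ax7 : ∀ x, ng (ng x) = x
  ax8 : ∀ x y, le x y → le (ng y) (ng x)
  ax9 : ∀ x y z, mns z ∈ comp x y ↔ ng z ∈ comp (ng (tld y)) (ng (tld x))

/-- The operation `¬U = {x : x^¬ ∉ U}` of the complex algebra of a DqRA-frame. -/
def DqRAFrame.nneg {W : Type*} (F : DqRAFrame W) (U : Set W) : Set W :=
  {x | F.ng x ∉ U}

/-- The principal upset `↑x = {y : x ≼ y}`. -/
def DInFLFrame.up {W : Type*} (F : DInFLFrame W) (x : W) : Set W :=
  {y | F.le x y}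

/-- `U` is a completely join-irreducible element of the complete lattice of
upsets of the frame (where joins of upsets are unions). -/
def DInFLFrame.IsCJIUpset {W : Type*} (F : DInFLFrame W) (U : Set W) : Prop :=
  F.IsUpset U ∧ ∀ 𝒮 : Set (Set W), (∀ V ∈ 𝒮, F.IsUpset V) → U = ⋃₀ 𝒮 → U ∈ 𝒮

/-- `κ(↑x) = ⋃ {U ∈ Up(W) : ↑x ⊄ U}`, computed in the complex algebra. -/
def DInFLFrame.kappaUp {W : Type*} (F : DInFLFrame W) (x : W) : Set W :=
  ⋃₀ {U | F.IsUpset U ∧ ¬ F.up x ⊆ U}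

namespace DInFLFrame

variable {W : Type*} (F : DInFLFrame W)

lemma le_iff_left {x y : W} : F.le x y ↔ ∃ i ∈ F.I, y ∈ F.comp i x := by
  rw [(F.ax1 x y).1]
  constructor
  · rintro ⟨i, hi, b, hb, h⟩; cases hb; exact ⟨i, hi, h⟩
  · rintro ⟨i, hi, h⟩; exact ⟨i, hi, x, rfl, h⟩

lemma le_iff_right {x y : W} : F.le x y ↔ ∃ i ∈ F.I, y ∈ F.comp x i := by
  rw [(F.ax1 x y).2]
  constructor
  · rintro ⟨a, ha, i, hi, h⟩; cases ha; exact ⟨i, hi, h⟩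
  · rintro ⟨i, hi, h⟩; exact ⟨x, rfl, i, hi, h⟩

lemma mns_tld (x : W) : F.mns (F.tld x) = x := by
  refine F.le_antisymm _ _ (F.ax6 x).1 ?_
  obtain ⟨i, hi, h⟩ := (F.le_iff_left).1 (F.le_refl (F.tld x))
  have h2 : F.mns (F.tld x) ∈ F.comp x i := (F.ax5 i (F.tld x) x).1 h
  exact (F.le_iff_right).2 ⟨i, hi, h2⟩

lemma tld_mns (x : W) : F.tld (F.mns x) = x := by
  refine F.le_antisymm _ _ (F.ax6 x).2 ?_
  obtain ⟨i, hi, h⟩ := (F.le_iff_right).1 (F.le_refl (F.mns x))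
  have h2 : F.tld (F.mns x) ∈ F.comp i x := (F.ax5 i x (F.mns x)).2 h
  exact (F.le_iff_left).2 ⟨i, hi, h2⟩

lemma tld_anti {x y : W} (h : F.le x y) : F.le (F.tld y) (F.tld x) := by
  obtain ⟨j, hj, hy⟩ := (F.le_iff_right).1 h
  have h1 : F.mns (F.tld y) ∈ F.comp x j := by rw [F.mns_tld]; exact hy
  have h2 : F.tld x ∈ F.comp j (F.tld y) := (F.ax5 j (F.tld y) x).2 h1
  exact (F.le_iff_left).2 ⟨j, hj, h2⟩

lemma mns_anti {x y : W} (h : F.le x y) : F.le (F.mns y) (F.mns x) := by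
  obtain ⟨j, hj, hy⟩ := (F.le_iff_left).1 h
  have h1 : F.tld (F.mns y) ∈ F.comp j x := by rw [F.tld_mns]; exact hy
  have h2 : F.mns x ∈ F.comp (F.mns y) j := (F.ax5 j x (F.mns y)).1 h1
  exact (F.le_iff_right).2 ⟨j, hj, h2⟩

lemma galois {w x : W} : F.le (F.mns w) x ↔ F.le (F.tld x) w := by
  constructor
  · intro h; have := F.tld_anti h; rwa [F.tld_mns] at this
  · intro h; have := F.mns_anti h; rwa [F.mns_tld] at this

lemma comp_mono_left {x x' y z : W} (h : F.le x x') (hz : z ∈ F.comp x' y) :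
    z ∈ F.comp x y := by
  obtain ⟨i, hi, hx'⟩ := (F.le_iff_left).1 h
  have h1 : z ∈ setComp F.comp (F.comp i x) ({y} : Set W) := ⟨x', hx', y, rfl, hz⟩
  rw [F.ax4] at h1
  obtain ⟨a, ha, w, hw, hz2⟩ := h1
  cases ha
  have hle : F.le w z := (F.le_iff_left).2 ⟨i, hi, hz2⟩
  exact F.ax3 x y w z hle hw

lemma comp_mono_right {x y y' z : W} (h : F.le y y') (hz : z ∈ F.comp x y') :
    z ∈ F.comp x y := by
  obtain ⟨i, hi, hy'⟩ := (F.le_iff_right).1 h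
  have h1 : z ∈ setComp F.comp ({x} : Set W) (F.comp y i) := ⟨x, rfl, y', hy', hz⟩
  rw [← F.ax4] at h1
  obtain ⟨w, hw, b, hb, hz2⟩ := h1
  cases hb
  have hle : F.le w z := (F.le_iff_right).2 ⟨i, hi, hz2⟩
  exact F.ax3 x y w z hle hw

lemma up_isUpset (x : W) : F.IsUpset (F.up x) :=
  fun a b hab ha => F.le_trans x a b ha hab

lemma mem_kappaUp {x y : W} : y ∈ F.kappaUp x ↔ ¬ F.le y x := by
  constructor
  · rintro ⟨U, ⟨hU, hnot⟩, hy⟩ hle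
    exact hnot (fun z hz => hU x z hz (hU y x hle hy))
  · intro h
    refine ⟨F.up y, ⟨F.up_isUpset y, fun hsub => h (hsub (F.le_refl x))⟩, F.le_refl y⟩

end DInFLFrame

/-- A DqRA-frame is isomorphic, via `x ↦ ↑x`, to the dual frame `(W⁺)₊` of its
complex algebra: `x ↦ ↑x` is an order-isomorphism onto the completely
join-irreducible upsets which preserves `I`, `∘`, `∼`, `−`, and in addition
satisfies `↑(x^¬) = (↑x)^¬`. -/
theorem dqra_frame_iso_dual_of_complex {W : Type*} (F : DqRAFrame W) :
    (∀ x, F.toDInFLFrame.IsCJIUpset (F.toDInFLFrame.up x)) ∧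
    (∀ U, F.toDInFLFrame.IsCJIUpset U → ∃ x, U = F.toDInFLFrame.up x) ∧
    Function.Injective F.toDInFLFrame.up ∧
    (∀ x y, F.le x y ↔ F.toDInFLFrame.up y ⊆ F.toDInFLFrame.up x) ∧
    (∀ x, x ∈ F.I ↔ F.toDInFLFrame.up x ⊆ F.I) ∧
    (∀ x y z, z ∈ F.comp x y ↔
      F.toDInFLFrame.up z ⊆
        setComp F.comp (F.toDInFLFrame.up x) (F.toDInFLFrame.up y)) ∧
    (∀ x, F.toDInFLFrame.up (F.tld x) = F.toDInFLFrame.sneg (F.toDInFLFrame.kappaUp x)) ∧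
    (∀ x, F.toDInFLFrame.up (F.mns x) = F.toDInFLFrame.mneg (F.toDInFLFrame.kappaUp x)) ∧
    (∀ x, F.toDInFLFrame.up (F.ng x) = F.nneg (F.toDInFLFrame.kappaUp x)) := by
  set G := F.toDInFLFrame with hG
  refine ⟨?_, ?_, ?_, ?_, ?_, ?_, ?_, ?_, ?_⟩
  · -- up x is CJI
    intro x
    refine ⟨G.up_isUpset x, ?_⟩
    intro 𝒮 hup hU
    have hx : x ∈ ⋃₀ 𝒮 := hU ▸ G.le_refl x
    obtain ⟨V, hV, hxV⟩ := hx
    have h1 : V ⊆ G.up x := by rw [hU]; exact fun z hz => ⟨V, hV, hz⟩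
    have h2 : G.up x ⊆ V := fun z hz => hup V hV x z hz hxV
    have : G.up x = V := le_antisymm h2 h1
    rwa [this]
  · -- every CJI upset is principal
    rintro U ⟨hup, hcji⟩
    have hU : U = ⋃₀ {V | ∃ x ∈ U, V = G.up x} := by
      ext z
      constructor
      · intro hz; exact ⟨G.up z, ⟨z, hz, rfl⟩, G.le_refl z⟩
      · rintro ⟨V, ⟨x, hx, rfl⟩, hz⟩; exact hup x z hz hx
    have := hcji _ (by rintro V ⟨x, _, rfl⟩; exact G.up_isUpset x) hU
    obtain ⟨x, _, hx⟩ := this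
    exact ⟨x, hx⟩
  · -- injective
    intro x y h
    have hx : F.le y x := by
      have : x ∈ G.up y := by rw [← h]; exact G.le_refl x
      exact this
    have hy : F.le x y := by
      have : y ∈ G.up x := by rw [h]; exact G.le_refl y
      exact this
    exact F.le_antisymm x y hy hx
  · -- order
    intro x y
    constructor
    · intro h z hz; exact F.le_trans x y z h hz
    · intro h; exact h (G.le_refl y)
  · -- I
    intro x
    exact ⟨fun hx y hy => F.ax2 x y hy hx, fun h => h (G.le_refl x)⟩
  · -- comp
    intro x y z
    constructor
    · intro hz w hw
      exact ⟨x, G.le_refl x, y, G.le_refl y, F.ax3 x y z w hw hz⟩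
    · intro h
      obtain ⟨x', hx', y', hy', hz⟩ := h (G.le_refl z)
      exact G.comp_mono_left hx' (G.comp_mono_right hy' hz)
  · -- tld
    intro x
    ext w
    simp only [DInFLFrame.sneg, Set.mem_setOf_eq, G.mem_kappaUp, not_not,
      DInFLFrame.up, G.galois]
  · -- mns
    intro x
    ext w
    simp only [DInFLFrame.mneg, Set.mem_setOf_eq, G.mem_kappaUp, not_not,
      DInFLFrame.up]
    constructor
    · intro h
      have := G.tld_anti h
      rwa [G.tld_mns] at this
    · intro h
      have := G.mns_anti h
      rwa [G.mns_tld] at this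
  · -- ng
    intro x
    ext w
    simp only [DqRAFrame.nneg, Set.mem_setOf_eq, G.mem_kappaUp, not_not,
      DInFLFrame.up]
    constructor
    · intro h
      have := F.ax8 _ _ h
      rwa [F.ax7] at this
    · intro h
      have := F.ax8 _ _ h
      rwa [F.ax7] at this
end

section
/- Let A and B be complete perfect distributive InFL-algebras and h : A → B a complete homomorphism. Then: (i) for every b ∈ B, b ≤ h(⋀ h⁻¹[↑b]); (ii) if a ∈ A, b ∈ B and b ≤ h(a), then ⋀ h⁻¹[↑b] ≤ a; (iii) if b is completely join-irreducible in B, then ⋀ h⁻¹[↑b] is completely join-irreducible in A; (iv) if a ∈ A, b is completely join-irreducible in B, and ⋀ h⁻¹[↑b] ≤ a, then b ≤ h(a). -/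
/-- An involutive FL-algebra (InFL-algebra) structure on a lattice:
a monoid operation with residuation law (Res) expressed via the two
linear negations `lneg` (∼) and `rneg` (−), which are inverse involutions. -/
structure InFL (A : Type*) [Lattice A] where
  mul : A → A → A
  one : A
  mul_assoc : ∀ a b c : A, mul (mul a b) c = mul a (mul b c)
  one_mul : ∀ a : A, mul one a = a
  mul_one : ∀ a : A, mul a one = a
  lneg : A → A
  rneg : A → A
  res_left : ∀ a b c : A, mul a b ≤ c ↔ a ≤ rneg (mul b (lneg c))
  res_right : ∀ a b c : A, mul a b ≤ c ↔ b ≤ lneg (mul (rneg c) a)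
  rneg_lneg : ∀ a : A, rneg (lneg a) = a
  lneg_rneg : ∀ a : A, lneg (rneg a) = a

/-- The sum operation `a + b := −(∼b · ∼a)` of an InFL-algebra. -/
def InFL.sum {A : Type*} [Lattice A] (S : InFL A) (a b : A) : A :=
  S.rneg (S.mul (S.lneg b) (S.lneg a))

/-- A quasi relation algebra: a De Morgan InFL-algebra satisfying (Dp):
`¬(a·b) = ¬a + ¬b`. -/
structure QRA (A : Type*) [Lattice A] extends InFL A where
  neg : A → A
  neg_neg : ∀ a : A, neg (neg a) = a
  dm : ∀ a b : A, neg (a ⊓ b) = neg a ⊔ neg b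
  dp : ∀ a b : A, neg (mul a b) = rneg (mul (lneg (neg b)) (lneg (neg a)))

/-- Completely join-irreducible element of a complete lattice. -/
def CJI {A : Type*} [CompleteLattice A] (j : A) : Prop :=
  ∀ S : Set A, j = sSup S → j ∈ S

/-- Completely meet-irreducible element of a complete lattice. -/
def CMI {A : Type*} [CompleteLattice A] (m : A) : Prop :=
  ∀ S : Set A, m = sInf S → m ∈ S

/-- A complete lattice is perfect if the completely join-irreducibles are join-dense
and the completely meet-irreducibles are meet-dense. -/
def PerfectLattice (A : Type*) [CompleteLattice A] : Prop :=
  ∀ a : A, a = sSup {j | CJI j ∧ j ≤ a} ∧ a = sInf {m | CMI m ∧ a ≤ m}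

/-- The map `κ(j) = ⋁ {a : j ≰ a}`. -/
def kappa {A : Type*} [CompleteLattice A] (j : A) : A :=
  sSup {a | ¬ j ≤ a}

/-- A complete homomorphism between complete (perfect distributive)
InFL-algebras: it preserves arbitrary joins and meets as well as
`·`, `1`, `∼` and `−`. -/
def IsCompleteInFLHom {A B : Type*} [CompleteLattice A] [CompleteLattice B]
    (SA : InFL A) (SB : InFL B) (h : A → B) : Prop :=
  (∀ S : Set A, h (sSup S) = sSup (h '' S)) ∧
  (∀ S : Set A, h (sInf S) = sInf (h '' S)) ∧
  (∀ a b : A, h (SA.mul a b) = SB.mul (h a) (h b)) ∧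
  h SA.one = SB.one ∧
  (∀ a : A, h (SA.lneg a) = SB.lneg (h a)) ∧
  (∀ a : A, h (SA.rneg a) = SB.rneg (h a))


lemma cji_not_le_kappa {B : Type*} [CompleteLattice B]
    (hperf : PerfectLattice B)
    (hdist : ∀ a b c : B, a ⊓ (b ⊔ c) = (a ⊓ b) ⊔ (a ⊓ c))
    {j : B} (hj : CJI j) : ¬ j ≤ kappa j := by
  set jstar := sSup {a : B | a < j} with hjs
  have hjsle : jstar ≤ j := sSup_le fun a ha => le_of_lt ha
  have hjslt : jstar < j := by
    rcases lt_or_eq_of_le hjsle with h | h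
    · exact h
    · exact absurd (hj _ h.symm) (lt_irrefl j)
  -- find a CMI m above jstar with ¬ j ≤ m
  obtain ⟨m, ⟨hmCMI, hjsm⟩, hjm⟩ :
      ∃ m, (CMI m ∧ jstar ≤ m) ∧ ¬ j ≤ m := by
    by_contra hcon
    push_neg at hcon
    have : j ≤ jstar := by
      have h1 := (hperf jstar).2
      rw [h1]
      exact le_sInf fun m hm => hcon m hm
    exact absurd (lt_of_le_of_lt this hjslt) (lt_irrefl j)
  have hk : kappa j ≤ m := by
    apply sSup_le
    intro a ha
    have haj : a ⊓ j < j := by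
      rcases lt_or_eq_of_le (inf_le_right : a ⊓ j ≤ j) with h | h
      · exact h
      · exact absurd (inf_eq_right.mp h) ha
    have hajm : a ⊓ j ≤ m := le_trans (le_sSup (show a ⊓ j ∈ {x : B | x < j} from haj)) hjsm
    have hmeq : m = (m ⊔ a) ⊓ (m ⊔ j) := by
      have e1 : (m ⊔ a) ⊓ (m ⊔ j) = ((m ⊔ a) ⊓ m) ⊔ ((m ⊔ a) ⊓ j) := hdist _ _ _
      have e2 : (m ⊔ a) ⊓ m = m := inf_eq_right.mpr le_sup_left
      have e3 : (m ⊔ a) ⊓ j = (j ⊓ m) ⊔ (j ⊓ a) := by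
        rw [inf_comm]; exact hdist _ _ _
      rw [e1, e2, e3]
      have hle : (j ⊓ m) ⊔ (j ⊓ a) ≤ m := sup_le inf_le_right (by rw [inf_comm]; exact hajm)
      exact (sup_eq_left.mpr hle).symm
    have hmem := hmCMI {m ⊔ a, m ⊔ j} (by rw [sInf_pair]; exact hmeq)
    rcases hmem with hma | hmj
    · exact sup_eq_left.mp hma.symm
    · exact absurd (sup_eq_left.mp (Set.mem_singleton_iff.mp hmj).symm) hjm
  intro hjk
  exact hjm (le_trans hjk hk)

lemma cji_prime {B : Type*} [CompleteLattice B]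
    (hperf : PerfectLattice B)
    (hdist : ∀ a b c : B, a ⊓ (b ⊔ c) = (a ⊓ b) ⊔ (a ⊓ c))
    {j : B} (hj : CJI j) (S : Set B) (hle : j ≤ sSup S) :
    ∃ s ∈ S, j ≤ s := by
  by_contra hcon
  push_neg at hcon
  have : sSup S ≤ kappa j := sSup_le fun s hs => le_sSup (hcon s hs)
  exact cji_not_le_kappa hperf hdist hj (le_trans hle this)

/-- For a complete homomorphism `h` between complete perfect distributive
InFL-algebras: (i) `b ≤ h(⋀ h⁻¹[↑b])`; (ii) if `b ≤ h(a)` then `⋀ h⁻¹[↑b] ≤ a`;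
(iii) `⋀ h⁻¹[↑b]` is completely join-irreducible whenever `b` is;
(iv) if `b` is completely join-irreducible and `⋀ h⁻¹[↑b] ≤ a` then `b ≤ h(a)`. -/
theorem complete_hom_inf_preimage {A B : Type*}
    [CompleteLattice A] [CompleteLattice B]
    (SA : InFL A) (SB : InFL B)
    (hperfA : PerfectLattice A) (hperfB : PerfectLattice B)
    (hdistA : ∀ a b c : A, a ⊓ (b ⊔ c) = (a ⊓ b) ⊔ (a ⊓ c))
    (hdistB : ∀ a b c : B, a ⊓ (b ⊔ c) = (a ⊓ b) ⊔ (a ⊓ c))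
    (h : A → B) (hh : IsCompleteInFLHom SA SB h) :
    (∀ b : B, b ≤ h (sInf {a : A | b ≤ h a})) ∧
    (∀ (a : A) (b : B), b ≤ h a → sInf {x : A | b ≤ h x} ≤ a) ∧
    (∀ b : B, CJI b → CJI (sInf {a : A | b ≤ h a})) ∧
    (∀ (a : A) (b : B), CJI b → sInf {x : A | b ≤ h x} ≤ a → b ≤ h a) := by
  obtain ⟨hsup, hinf, hmul, hone, hln, hrn⟩ := hh
  have hi : ∀ b : B, b ≤ h (sInf {a : A | b ≤ h a}) := by
    intro b
    rw [hinf]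
    apply le_sInf
    rintro y ⟨a, ha, rfl⟩
    exact ha
  have hii : ∀ (a : A) (b : B), b ≤ h a → sInf {x : A | b ≤ h x} ≤ a :=
    fun a b hba => sInf_le hba
  have hmono : ∀ a a' : A, a ≤ a' → h a ≤ h a' := by
    intro a a' hle
    have hs := hsup {a, a'}
    rw [sSup_pair, sup_eq_right.mpr hle] at hs
    rw [hs]
    exact le_sSup ⟨a, by simp, rfl⟩
  refine ⟨hi, hii, ?_, ?_⟩
  · intro b hb S hS
    have hbh : b ≤ h (sSup S) := by rw [← hS]; exact hi b
    rw [hsup] at hbh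
    obtain ⟨y, ⟨s, hsS, rfl⟩, hby⟩ := cji_prime hperfB hdistB hb _ hbh
    have h1 : sInf {a : A | b ≤ h a} ≤ s := sInf_le hby
    have h2 : s ≤ sInf {a : A | b ≤ h a} := by rw [hS]; exact le_sSup hsS
    have : sInf {a : A | b ≤ h a} = s := le_antisymm h1 h2
    rw [this]; exact hsS
  · intro a b _ hca
    exact le_trans (hi b) (hmono _ _ hca)
end
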